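/- arXiv:2007.04276 — 4 statements merged into one kernel-verified Lean document; each statement's English description precedes it below -/
import Mathlib

section
/- Let ρ be a density matrix on ℂ^d ⊗ ℂ^D (a complex matrix indexed by (Fin d × Fin D)), let {e_i}_{i∈I} (I a finite index set) be an orthonormal family in ℂ^d, and let {Π_i}_{i∈I} be orthogonal projectors on ℂ^D (Π_i² = Π_i = Π_i†) with Π_i Π_j = 0 for i ≠ j. If ∑_{i∈I} (|e_i⟩⟨e_i| ⊗ Π_i) ρ (|e_i⟩⟨e_i| ⊗ Π_i) = ρ, then there exist nonnegative reals p_i with ∑_i p_i = 1 and density matrices ϱ_i on ℂ^D with Π_i ϱ_i Π_i = ϱ_i whenever p_i > 0, such that ρ = ∑_i p_i |e_i⟩⟨e_i| ⊗ ϱ_i. -/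
open scoped Kronecker Matrix ComplexOrder BigOperators
open Matrix

noncomputable section

/-- The rank-one operator `|v⟩⟨w| = v wᴴ`. -/
def ketBra {n : Type*} (v w : n → ℂ) : Matrix n n ℂ := Matrix.vecMulVec v (star w)

/-- A density matrix: positive semidefinite with unit trace. -/
def IsDensityMatrix {n : Type*} [Fintype n] (ρ : Matrix n n ℂ) : Prop :=
  ρ.PosSemidef ∧ ρ.trace = 1

/-- An orthonormal family of vectors. -/
def OrthonormalFamily {n I : Type*} [Fintype n] [DecidableEq I] (e : I → n → ℂ) : Prop :=
  ∀ i j, star (e i) ⬝ᵥ e j = (if i = j then 1 else 0)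

lemma psd_smul_real {n : Type*} [Fintype n] {A : Matrix n n ℂ} (hA : A.PosSemidef)
    {c : ℝ} (hc : 0 ≤ c) : ((c : ℂ) • A).PosSemidef := by
  rw [posSemidef_iff_dotProduct_mulVec]
  constructor
  · show ((c : ℂ) • A)ᴴ = (c : ℂ) • A
    rw [conjTranspose_smul, hA.1.eq]
    simp
  · intro x
    rw [smul_mulVec, dotProduct_smul, smul_eq_mul]
    exact mul_nonneg (Complex.zero_le_real.mpr hc) (hA.dotProduct_mulVec_nonneg x)

lemma psd_diag_nonneg {n : Type*} [Fintype n] [DecidableEq n] {A : Matrix n n ℂ}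
    (hA : A.PosSemidef) (j : n) : 0 ≤ A j j := by
  have h := hA.dotProduct_mulVec_nonneg (Pi.single j 1)
  simpa [dotProduct, mulVec, Pi.single_apply, mul_ite, ite_mul,
    Finset.sum_ite_eq, Finset.sum_ite_eq'] using h

lemma psd_trace_nonneg {n : Type*} [Fintype n] [DecidableEq n] {A : Matrix n n ℂ}
    (hA : A.PosSemidef) : 0 ≤ A.trace :=
  Finset.sum_nonneg fun j _ => psd_diag_nonneg hA j

lemma psd_eq_zero_of_trace_eq_zero {n : Type*} [Fintype n] [DecidableEq n] {A : Matrix n n ℂ}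
    (hA : A.PosSemidef) (h : A.trace = 0) : A = 0 := by
  obtain ⟨B, rfl⟩ := by open scoped MatrixOrder in exact CStarAlgebra.nonneg_iff_eq_star_mul_self.mp hA.nonneg
  rw [star_eq_conjTranspose] at h
  suffices hB : B = 0 by simp [hB]
  have htr : (Bᴴ * B).trace = ((∑ j, ∑ k, Complex.normSq (B k j) : ℝ) : ℂ) := by
    push_cast
    simp only [Matrix.trace, Matrix.diag_apply, Matrix.mul_apply, conjTranspose_apply]
    refine Finset.sum_congr rfl fun j _ => Finset.sum_congr rfl fun k _ => ?_
    rw [Complex.star_def, mul_comm, Complex.mul_conj]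
  rw [htr, Complex.ofReal_eq_zero] at h
  have hz : ∀ j ∈ Finset.univ, ∀ k ∈ Finset.univ, Complex.normSq (B k j) = 0 := by
    intro j _ k _
    have h1 := (Finset.sum_eq_zero_iff_of_nonneg (fun j _ =>
      Finset.sum_nonneg fun k _ => Complex.normSq_nonneg _)).mp h j (Finset.mem_univ j)
    exact (Finset.sum_eq_zero_iff_of_nonneg (fun k _ => Complex.normSq_nonneg _)).mp h1 k
      (Finset.mem_univ k)
  ext k j
  simpa using Complex.normSq_eq_zero.mp (hz j (Finset.mem_univ j) k (Finset.mem_univ k))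

/-- Bohr non-disturbance of a product projective measurement forces a
classical-quantum (block) structure. -/
theorem stmt_0 {d D : ℕ} {I : Type*} [Fintype I] [DecidableEq I]
    (ρ : Matrix (Fin d × Fin D) (Fin d × Fin D) ℂ) (hρ : IsDensityMatrix ρ)
    (e : I → Fin d → ℂ) (he : OrthonormalFamily e)
    (P : I → Matrix (Fin D) (Fin D) ℂ)
    (hidem : ∀ i, P i * P i = P i)
    (hherm : ∀ i, (P i)ᴴ = P i)
    (horth : ∀ i j, i ≠ j → P i * P j = 0)
    (hBohr : ∑ i, (ketBra (e i) (e i) ⊗ₖ P i) * ρ * (ketBra (e i) (e i) ⊗ₖ P i) = ρ) :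
    ∃ (p : I → ℝ) (ϱ : I → Matrix (Fin D) (Fin D) ℂ),
      (∀ i, 0 ≤ p i) ∧ (∑ i, p i = 1) ∧
      (∀ i, IsDensityMatrix (ϱ i)) ∧
      (∀ i, 0 < p i → P i * ϱ i * P i = ϱ i) ∧
      ρ = ∑ i, (p i : ℂ) • (ketBra (e i) (e i) ⊗ₖ ϱ i) := by
  classical
  obtain ⟨hpsd, htr1⟩ := hρ
  rcases isEmpty_or_nonempty (Fin d × Fin D) with hE | hNE
  · exact absurd htr1 (by simp [Matrix.trace_eq_zero_of_isEmpty])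
  have hD0 : (D : ℂ) ≠ 0 := by
    obtain ⟨⟨a, x⟩⟩ := hNE
    exact Nat.cast_ne_zero.mpr x.pos.ne'
  set B : I → Matrix (Fin d × Fin D) (Fin D) ℂ :=
    fun i => Matrix.of (fun cz y => e i cz.1 * P i cz.2 y) with hBdef
  set K : I → Matrix (Fin d × Fin D) (Fin D) ℂ :=
    fun i => Matrix.of (fun ax y => e i ax.1 * (if ax.2 = y then 1 else 0)) with hKdef
  set σ : I → Matrix (Fin D) (Fin D) ℂ := fun i => (B i)ᴴ * ρ * B i with hσdef
  have hPc : ∀ i x z, star (P i z x) = P i x z := by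
    intro i x z
    rw [← conjTranspose_apply, hherm]
  -- A_i = K_i B_iᴴ
  have hA1 : ∀ i, ketBra (e i) (e i) ⊗ₖ P i = K i * (B i)ᴴ := by
    intro i
    ext ⟨a, x⟩ ⟨b, z⟩
    rw [Matrix.mul_apply, Finset.sum_eq_single x]
    · simp only [hKdef, hBdef, conjTranspose_apply, Matrix.of_apply, if_pos rfl, mul_one,
        kroneckerMap_apply, ketBra, vecMulVec_apply, Pi.star_apply, star_mul', hPc,
        if_true, star_one]
      ring
    · intro y _ hyx
      simp [hKdef, if_neg (Ne.symm hyx)]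
    · simp
  -- A_i = B_i K_iᴴ
  have hA2 : ∀ i, ketBra (e i) (e i) ⊗ₖ P i = B i * (K i)ᴴ := by
    intro i
    ext ⟨a, x⟩ ⟨b, z⟩
    rw [Matrix.mul_apply, Finset.sum_eq_single z]
    · simp only [hKdef, hBdef, conjTranspose_apply, Matrix.of_apply, if_pos rfl, mul_one,
        kroneckerMap_apply, ketBra, vecMulVec_apply, Pi.star_apply, star_mul', star_one,
        if_true, hPc]
      ring
    · intro y _ hyz
      simp [hKdef, if_neg (Ne.symm hyz)]
    · simp
  -- K_i M K_iᴴ = ketBra ⊗ M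
  have hKMK : ∀ i (M : Matrix (Fin D) (Fin D) ℂ), K i * M * (K i)ᴴ = ketBra (e i) (e i) ⊗ₖ M := by
    intro i M
    ext ⟨a, x⟩ ⟨b, y⟩
    rw [Matrix.mul_apply]
    rw [Finset.sum_eq_single y]
    · rw [Matrix.mul_apply, Finset.sum_eq_single x]
      · simp only [hKdef, Matrix.of_apply, if_pos rfl, mul_one, conjTranspose_apply, star_mul',
          star_one, kroneckerMap_apply, ketBra, vecMulVec_apply, Pi.star_apply, if_true]
        ring
      · intro w _ hwx
        simp [hKdef, if_neg (Ne.symm hwx)]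
      · simp
    · intro w _ hwy
      simp [hKdef, if_neg (Ne.symm hwy)]
    · simp
  have hBP : ∀ i, B i * P i = B i := by
    intro i
    ext ⟨c, z⟩ y
    have h2 : (P i * P i) z y = P i z y := by rw [hidem i]
    rw [Matrix.mul_apply] at h2
    simp only [Matrix.mul_apply, hBdef, Matrix.of_apply, mul_assoc, ← Finset.mul_sum]
    rw [h2]
  have hPB : ∀ i, P i * (B i)ᴴ = (B i)ᴴ := by
    intro i
    have h := congrArg conjTranspose (hBP i)
    rwa [conjTranspose_mul, hherm] at h
  have hsum : ρ = ∑ i, ketBra (e i) (e i) ⊗ₖ σ i := by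
    conv_lhs => rw [← hBohr]
    refine Finset.sum_congr rfl fun i _ => ?_
    nth_rewrite 2 [hA2 i]
    rw [hA1 i, ← hKMK i (σ i)]
    simp only [hσdef, Matrix.mul_assoc]
  have hσpsd : ∀ i, (σ i).PosSemidef := fun i => hpsd.conjTranspose_mul_mul_same (B i)
  have hPσP : ∀ i, P i * σ i * P i = σ i := by
    intro i
    rw [hσdef]
    show P i * ((B i)ᴴ * ρ * B i) * P i = (B i)ᴴ * ρ * B i
    simp only [← Matrix.mul_assoc]
    rw [hPB, Matrix.mul_assoc ((B i)ᴴ * ρ), hBP]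
  have hket : ∀ i, (ketBra (e i) (e i)).trace = 1 := by
    intro i
    have h := he i i
    rw [if_pos rfl] at h
    rw [Matrix.trace, ← h]
    simp [Matrix.diag_apply, ketBra, vecMulVec_apply, dotProduct, mul_comm]
  have htrsum : ∑ i, (σ i).trace = 1 := by
    have h := congrArg Matrix.trace hsum
    rw [htr1, Matrix.trace_sum] at h
    simp only [Matrix.trace_kronecker, hket, one_mul] at h
    exact h.symm
  have hre : ∀ i, 0 ≤ (σ i).trace := fun i => psd_trace_nonneg (hσpsd i)
  set p : I → ℝ := fun i => ((σ i).trace).re with hpdef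
  have hpc : ∀ i, ((p i : ℝ) : ℂ) = (σ i).trace := by
    intro i
    have h := Complex.le_def.mp (hre i)
    exact Complex.ext rfl (by simpa using h.2)
  have hp0 : ∀ i, 0 ≤ p i := by
    intro i
    have h := (Complex.le_def.mp (hre i)).1
    simpa using h
  have hp1 : ∑ i, p i = 1 := by
    have h : ((∑ i, p i : ℝ) : ℂ) = 1 := by
      rw [Complex.ofReal_sum]
      simp only [hpc]
      exact htrsum
    exact_mod_cast h
  set ϱ : I → Matrix (Fin D) (Fin D) ℂ :=
    fun i => if 0 < p i then ((p i : ℂ))⁻¹ • σ i else ((D : ℂ))⁻¹ • 1 with hϱdef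
  refine ⟨p, ϱ, hp0, hp1, ?_, ?_, ?_⟩
  · intro i
    by_cases h : 0 < p i
    · rw [hϱdef]
      simp only [if_pos h]
      constructor
      · rw [show ((p i : ℂ))⁻¹ = (((p i)⁻¹ : ℝ) : ℂ) by push_cast; ring]
        exact psd_smul_real (hσpsd i) (inv_nonneg.mpr (hp0 i))
      · rw [Matrix.trace_smul, smul_eq_mul, ← hpc i, ← Complex.ofReal_inv,
          ← Complex.ofReal_mul, inv_mul_cancel₀ h.ne', Complex.ofReal_one]
    · rw [hϱdef]
      simp only [if_neg h]
      constructor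
      · rw [show ((D : ℂ))⁻¹ = (((D : ℝ)⁻¹ : ℝ) : ℂ) by push_cast; ring]
        exact psd_smul_real Matrix.PosSemidef.one (inv_nonneg.mpr (Nat.cast_nonneg D))
      · rw [Matrix.trace_smul, Matrix.trace_one, smul_eq_mul]
        simp only [Fintype.card_fin]
        exact inv_mul_cancel₀ hD0
  · intro i h
    rw [hϱdef]
    simp only [if_pos h]
    rw [Matrix.mul_smul, Matrix.smul_mul, hPσP i]
  · rw [hsum]
    refine Finset.sum_congr rfl fun i _ => ?_
    by_cases h : 0 < p i
    · rw [hϱdef]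
      simp only [if_pos h, Matrix.kronecker_smul, smul_smul]
      rw [mul_inv_cancel₀ (Complex.ofReal_ne_zero.mpr h.ne'), one_smul]
    · have hp : p i = 0 := le_antisymm (not_lt.mp h) (hp0 i)
      have hσ0 : σ i = 0 := psd_eq_zero_of_trace_eq_zero (hσpsd i) (by rw [← hpc i, hp]; simp)
      simp [hσ0, hp]
end
end

section
/- Let ϱ_i (i in a finite index set I) be positive semidefinite matrices on the N-fold tensor product ℂ^{D_1} ⊗ ⋯ ⊗ ℂ^{D_N}, and for each k let {Π_i^k}_{i∈I} be orthogonal projectors on ℂ^{D_k} with Π_i^k Π_j^k = 0 for i ≠ j. Assume (Π_i^1 ⊗ ⋯ ⊗ Π_i^N) ϱ_i (Π_i^1 ⊗ ⋯ ⊗ Π_i^N) = ϱ_i for every i. Then for every nonempty subset K ⊆ {1,…,N}, the reductions ϱ_i^K obtained by taking the partial trace of ϱ_i over all tensor factors not in K satisfy: (⊗_{k∈K} Π_i^k) ϱ_i^K (⊗_{k∈K} Π_i^k) = ϱ_i^K for every i, and ϱ_i^K ϱ_j^K = 0 for all i ≠ j. -/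
open scoped Kronecker Matrix ComplexOrder BigOperators
open Matrix

noncomputable section

/-- The `N`-fold Kronecker (tensor) product of a family of matrices. -/
def tensorFamily {N : ℕ} {D : Fin N → ℕ} (M : ∀ k, Matrix (Fin (D k)) (Fin (D k)) ℂ) :
    Matrix (∀ k, Fin (D k)) (∀ k, Fin (D k)) ℂ :=
  fun a a' => ∏ k, M k (a k) (a' k)

/-- The Kronecker (tensor) product of the matrices `M k` over the factors `k ∈ K`. -/
def tensorOn {N : ℕ} {D : Fin N → ℕ} (K : Finset (Fin N))
    (M : ∀ k, Matrix (Fin (D k)) (Fin (D k)) ℂ) :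
    Matrix (∀ k : K, Fin (D k.1)) (∀ k : K, Fin (D k.1)) ℂ :=
  fun a a' => ∏ k : K, M k.1 (a k) (a' k)

/-- The partial trace of a matrix on an `N`-fold tensor product over all
tensor factors *not* in `K` (entrywise: sum over equal indices in the traced factors). -/
def reduceTo {N : ℕ} {D : Fin N → ℕ} (K : Finset (Fin N))
    (M : Matrix (∀ k, Fin (D k)) (∀ k, Fin (D k)) ℂ) :
    Matrix (∀ k : K, Fin (D k.1)) (∀ k : K, Fin (D k.1)) ℂ :=
  fun a a' => ∑ b : ∀ k : {k : Fin N // k ∉ K}, Fin (D k.1),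
    M (fun k => if h : k ∈ K then a ⟨k, h⟩ else b ⟨k, h⟩)
      (fun k => if h : k ∈ K then a' ⟨k, h⟩ else b ⟨k, h⟩)

/-- The single-party reduction: the partial trace over all tensor factors except the `k`-th. -/
def reduceSingle {N : ℕ} {D : Fin N → ℕ} (k : Fin N)
    (M : Matrix (∀ l, Fin (D l)) (∀ l, Fin (D l)) ℂ) :
    Matrix (Fin (D k)) (Fin (D k)) ℂ :=
  fun a a' => ∑ b : ∀ l : {l : Fin N // l ≠ k}, Fin (D l.1),
    M (fun l => if h : l = k then cast (congrArg (fun i => Fin (D i)) h.symm) a else b ⟨l, h⟩)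
      (fun l => if h : l = k then cast (congrArg (fun i => Fin (D i)) h.symm) a' else b ⟨l, h⟩)

namespace SBSAux

variable {N : ℕ} {D : Fin N → ℕ}

def glue (K : Finset (Fin N)) (a : ∀ k : K, Fin (D k.1))
    (b : ∀ k : {k : Fin N // k ∉ K}, Fin (D k.1)) : ∀ k, Fin (D k) :=
  fun k => if h : k ∈ K then a ⟨k, h⟩ else b ⟨k, h⟩

def pEquiv (K : Finset (Fin N)) :
    (∀ k, Fin (D k)) ≃ (∀ k : K, Fin (D k.1)) × (∀ k : {k : Fin N // k ∉ K}, Fin (D k.1)) where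
  toFun x := (fun k => x k.1, fun k => x k.1)
  invFun p := glue K p.1 p.2
  left_inv x := by
    funext k
    by_cases h : k ∈ K <;> simp [glue, h]
  right_inv p := by
    ext k
    · simp [glue, k.2]
    · simp [glue, k.2]

lemma sum_glue (K : Finset (Fin N)) (f : (∀ k, Fin (D k)) → ℂ) :
    ∑ x, f x = ∑ a, ∑ b, f (glue K a b) := by
  rw [← Equiv.sum_comp (pEquiv (D := D) K).symm f, Fintype.sum_prod_type]
  rfl

lemma reduceTo_apply (K : Finset (Fin N)) (M : Matrix (∀ k, Fin (D k)) (∀ k, Fin (D k)) ℂ)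
    (a a' : ∀ k : K, Fin (D k.1)) :
    reduceTo K M a a' = ∑ b, M (glue K a b) (glue K a' b) := rfl

lemma tensorFamily_glue (K : Finset (Fin N)) (M : ∀ k, Matrix (Fin (D k)) (Fin (D k)) ℂ)
    (a a' : ∀ k : K, Fin (D k.1)) (b b' : ∀ k : {k : Fin N // k ∉ K}, Fin (D k.1)) :
    tensorFamily M (glue K a b) (glue K a' b')
      = tensorOn K M a a' * ∏ k : {k : Fin N // k ∉ K}, M k.1 (b k) (b' k) := by
  unfold tensorFamily tensorOn
  rw [← Fintype.prod_subtype_mul_prod_subtype (fun k => k ∈ K)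
    (fun k => M k (glue K a b k) (glue K a' b' k))]
  congr 1
  · refine Finset.prod_congr (congrArg (fun i => @Finset.univ _ i) (Subsingleton.elim _ _))
      fun k _ => by simp [glue, k.2]
  · refine Finset.prod_congr rfl fun k _ => by simp [glue, k.2]

lemma tensorOn_mul (K : Finset (Fin N)) (M M' : ∀ k, Matrix (Fin (D k)) (Fin (D k)) ℂ) :
    tensorOn K M * tensorOn K M' = tensorOn K (fun k => M k * M' k) := by
  ext a a'
  simp only [Matrix.mul_apply, tensorOn, ← Finset.prod_mul_distrib]
  rw [Finset.prod_univ_sum (fun _ => Finset.univ)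
      (fun (k : K) t => M k.1 (a k) t * M' k.1 t (a' k)), Fintype.piFinset_univ]

lemma tensorOn_zero (K : Finset (Fin N)) (hK : K.Nonempty) :
    tensorOn (D := D) K (fun _ => 0) = 0 := by
  obtain ⟨k0, hk0⟩ := hK
  ext a a'
  exact Finset.prod_eq_zero (Finset.mem_univ (⟨k0, hk0⟩ : K)) rfl

/-- The reduction of `tensorFamily P * M` factors as `tensorOn K P * S`. -/
lemma redL (K : Finset (Fin N)) (P : ∀ k, Matrix (Fin (D k)) (Fin (D k)) ℂ)
    (M : Matrix (∀ k, Fin (D k)) (∀ k, Fin (D k)) ℂ) :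
    ∃ S, reduceTo K (tensorFamily P * M) = tensorOn K P * S := by
  refine ⟨fun e a' => ∑ b, ∑ d, (∏ k : {k : Fin N // k ∉ K}, P k.1 (b k) (d k))
      * M (glue K e d) (glue K a' b), ?_⟩
  ext a a'
  erw [Matrix.mul_apply, reduceTo_apply]
  have step : ∀ b, (tensorFamily P * M) (glue K a b) (glue K a' b)
      = ∑ e, ∑ d, tensorOn K P a e
          * ((∏ k : {k : Fin N // k ∉ K}, P k.1 (b k) (d k)) * M (glue K e d) (glue K a' b)) := by
    intro b
    rw [Matrix.mul_apply,
      sum_glue K (fun x => tensorFamily P (glue K a b) x * M x (glue K a' b))]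
    exact Finset.sum_congr rfl fun e _ => Finset.sum_congr rfl fun d _ => by
      rw [tensorFamily_glue, mul_assoc]
  simp only [step, Finset.mul_sum]
  rw [Finset.sum_comm]

/-- The reduction of `M * tensorFamily P` factors as `T * tensorOn K P`. -/
lemma redR (K : Finset (Fin N)) (P : ∀ k, Matrix (Fin (D k)) (Fin (D k)) ℂ)
    (M : Matrix (∀ k, Fin (D k)) (∀ k, Fin (D k)) ℂ) :
    ∃ T, reduceTo K (M * tensorFamily P) = T * tensorOn K P := by
  refine ⟨fun a e => ∑ b, ∑ d, M (glue K a b) (glue K e d)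
      * ∏ k : {k : Fin N // k ∉ K}, P k.1 (d k) (b k), ?_⟩
  ext a a'
  erw [Matrix.mul_apply, reduceTo_apply]
  have step : ∀ b, (M * tensorFamily P) (glue K a b) (glue K a' b)
      = ∑ e, ∑ d, (M (glue K a b) (glue K e d)
          * ∏ k : {k : Fin N // k ∉ K}, P k.1 (d k) (b k)) * tensorOn K P e a' := by
    intro b
    rw [Matrix.mul_apply,
      sum_glue K (fun x => M (glue K a b) x * tensorFamily P x (glue K a' b))]
    refine Finset.sum_congr rfl fun e _ => Finset.sum_congr rfl fun d _ => ?_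
    rw [tensorFamily_glue]
    ring
  simp only [step, Finset.sum_mul]
  rw [Finset.sum_comm]

end SBSAux

open SBSAux in
/-- Fine-grained preservation and orthogonality of generalized SBS states: every
reduction to a subset of subenvironments remains preserved by the local
measurements and one-shot distinguishable. -/
theorem stmt_2 {N : ℕ} {D : Fin N → ℕ} {I : Type*} [Fintype I]
    (ϱ : I → Matrix (∀ k, Fin (D k)) (∀ k, Fin (D k)) ℂ)
    (hpsd : ∀ i, (ϱ i).PosSemidef)
    (P : ∀ (k : Fin N), I → Matrix (Fin (D k)) (Fin (D k)) ℂ)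
    (hidem : ∀ k i, P k i * P k i = P k i)
    (hherm : ∀ k i, (P k i)ᴴ = P k i)
    (horth : ∀ k, ∀ i j, i ≠ j → P k i * P k j = 0)
    (hpres : ∀ i,
      tensorFamily (fun k => P k i) * ϱ i * tensorFamily (fun k => P k i) = ϱ i) :
    ∀ K : Finset (Fin N), K.Nonempty →
      (∀ i, tensorOn K (fun k => P k i) * reduceTo K (ϱ i) * tensorOn K (fun k => P k i)
          = reduceTo K (ϱ i)) ∧
      (∀ i j, i ≠ j → reduceTo K (ϱ i) * reduceTo K (ϱ j) = 0) := by
  intro K hK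
  set Q : I → Matrix (∀ k : K, Fin (D k.1)) (∀ k : K, Fin (D k.1)) ℂ :=
    fun i => tensorOn K (fun k => P k i) with hQdef
  have hQ : ∀ i, Q i * Q i = Q i := by
    intro i
    rw [hQdef, tensorOn_mul]
    exact congrArg (tensorOn K) (funext fun k => hidem k i)
  have hL : ∀ i, ∃ S, reduceTo K (ϱ i) = Q i * S := by
    intro i
    obtain ⟨S, hS⟩ := redL K (fun k => P k i) (ϱ i * tensorFamily (fun k => P k i))
    exact ⟨S, by rw [← hS, ← mul_assoc, hpres i]⟩
  have hR : ∀ i, ∃ T, reduceTo K (ϱ i) = T * Q i := by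
    intro i
    obtain ⟨T, hT⟩ := redR K (fun k => P k i) (tensorFamily (fun k => P k i) * ϱ i)
    exact ⟨T, by rw [← hT, hpres i]⟩
  constructor
  · intro i
    obtain ⟨S, hS⟩ := hL i
    obtain ⟨T, hT⟩ := hR i
    calc Q i * reduceTo K (ϱ i) * Q i
        = Q i * (Q i * S) * Q i := by rw [← hS]
      _ = (Q i * Q i) * S * Q i := by rw [mul_assoc (Q i) (Q i) S]
      _ = reduceTo K (ϱ i) * Q i := by rw [hQ i, ← hS]
      _ = T * Q i * Q i := by rw [hT]
      _ = T * (Q i * Q i) := by rw [mul_assoc]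
      _ = reduceTo K (ϱ i) := by rw [hQ i, ← hT]
  · intro i j hij
    obtain ⟨T, hT⟩ := hR i
    obtain ⟨S, hS⟩ := hL j
    have hQQ : Q i * Q j = 0 := by
      rw [hQdef, tensorOn_mul]
      have : (fun k => P k i * P k j) = fun _ : Fin N => (0 : Matrix _ _ ℂ) := by
        funext k
        · ext x y
          rw [horth k i j hij]
      rw [this]
      exact tensorOn_zero K hK
    calc reduceTo K (ϱ i) * reduceTo K (ϱ j)
        = T * Q i * (Q j * S) := by rw [hT, hS]
      _ = T * (Q i * Q j) * S := by rw [mul_assoc, mul_assoc, mul_assoc]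
      _ = 0 := by rw [hQQ, mul_zero, zero_mul]
end
end

section
/- Let ϱ be a density matrix on the N-fold tensor product ℂ^{D_1} ⊗ ⋯ ⊗ ℂ^{D_N}, and for each k let Π^k be the support projector of the k-th single-party reduction ϱ^k = tr_{all factors except k}(ϱ). Then (Π^1 ⊗ ⋯ ⊗ Π^N) ϱ (Π^1 ⊗ ⋯ ⊗ Π^N) = ϱ. -/
open scoped Kronecker Matrix ComplexOrder BigOperators
open Matrix

noncomputable section

/-- The support projector of a Hermitian matrix: the orthogonal projection onto its range. -/
def suppProj {n : Type*} [Fintype n] [DecidableEq n] (A : Matrix n n ℂ) : Matrix n n ℂ :=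
  if hA : A.IsHermitian then
    (hA.eigenvectorUnitary : Matrix n n ℂ) *
      Matrix.diagonal (fun i => if hA.eigenvalues i = 0 then (0 : ℂ) else 1) *
      (hA.eigenvectorUnitary : Matrix n n ℂ)ᴴ
  else 0

/-! ### Auxiliary lemmas about `suppProj` -/

section SP
variable {n : Type*} [Fintype n] [DecidableEq n] {A : Matrix n n ℂ}

lemma suppProj_def (hA : A.IsHermitian) : suppProj A =
    (hA.eigenvectorUnitary : Matrix n n ℂ) *
      Matrix.diagonal (fun i => if hA.eigenvalues i = 0 then (0 : ℂ) else 1) *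
      (hA.eigenvectorUnitary : Matrix n n ℂ)ᴴ := dif_pos hA

lemma suppProj_isHermitian (hA : A.IsHermitian) : (suppProj A).IsHermitian := by
  rw [suppProj_def hA]
  exact Matrix.isHermitian_mul_mul_conjTranspose _
    (Matrix.isHermitian_diagonal_iff.mpr fun i => by
      by_cases h : hA.eigenvalues i = 0 <;> simp [h, _root_.IsSelfAdjoint])

lemma star_mul_self_unitary (hA : A.IsHermitian) :
    (hA.eigenvectorUnitary : Matrix n n ℂ)ᴴ * (hA.eigenvectorUnitary : Matrix n n ℂ) = 1 := by
  have : (star (hA.eigenvectorUnitary : Matrix n n ℂ)) * (hA.eigenvectorUnitary : Matrix n n ℂ) = 1 :=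
    Unitary.coe_star_mul_self _
  rwa [Matrix.star_eq_conjTranspose] at this

lemma conj_mul_conj (U X Y : Matrix n n ℂ) (hU : Uᴴ * U = 1) :
    (U * X * Uᴴ) * (U * Y * Uᴴ) = U * (X * Y) * Uᴴ := by
  simp only [Matrix.mul_assoc]
  rw [← Matrix.mul_assoc Uᴴ U, hU, Matrix.one_mul]

lemma suppProj_mul_self (hA : A.IsHermitian) : suppProj A * suppProj A = suppProj A := by
  rw [suppProj_def hA, conj_mul_conj _ _ _ (star_mul_self_unitary hA),
    Matrix.diagonal_mul_diagonal]
  have : (fun i => (if hA.eigenvalues i = 0 then (0:ℂ) else 1) *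
      (if hA.eigenvalues i = 0 then (0:ℂ) else 1))
      = fun i => if hA.eigenvalues i = 0 then (0:ℂ) else 1 :=
    funext fun i => by by_cases h : hA.eigenvalues i = 0 <;> simp [h]
  rw [this]

lemma mul_suppProj (hA : A.IsHermitian) : A * suppProj A = A := by
  rw [suppProj_def hA]
  set U := (hA.eigenvectorUnitary : Matrix n n ℂ) with hUdef
  set v := hA.eigenvalues with hvdef
  have hs : A = U * Matrix.diagonal (fun i => ((v i : ℝ) : ℂ)) * Uᴴ := by
    rw [← Matrix.star_eq_conjTranspose]
    have h := hA.spectral_theorem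
    rw [Unitary.conjStarAlgAut_apply] at h
    exact h
  rw [hs, conj_mul_conj _ _ _ (star_mul_self_unitary hA), Matrix.diagonal_mul_diagonal]
  have : (fun i => ((v i : ℝ) : ℂ) * (if v i = 0 then (0:ℂ) else 1))
      = fun i => ((v i : ℝ) : ℂ) :=
    funext fun i => by by_cases h : v i = 0 <;> simp [h]
  rw [this]

end SP

/-- A positive semidefinite matrix with zero trace is zero. -/
lemma psd_trace_eq_zero {n : Type*} [Fintype n] {A : Matrix n n ℂ} (hA : A.PosSemidef)
    (h : A.trace = 0) : A = 0 := by
  classical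
  obtain ⟨B, rfl⟩ : ∃ B : Matrix n n ℂ, A = Bᴴ * B := by
    open scoped MatrixOrder in
    obtain ⟨B, hB⟩ := CStarAlgebra.nonneg_iff_eq_star_mul_self.mp hA.nonneg
    exact ⟨B, by rw [hB, Matrix.star_eq_conjTranspose]⟩
  suffices hB : B = 0 by simp [hB]
  simp only [Matrix.trace, Matrix.diag_apply, Matrix.mul_apply, Matrix.conjTranspose_apply] at h
  have h2 : ((∑ j, ∑ i, Complex.normSq (B i j) : ℝ) : ℂ) = 0 := by
    push_cast
    rw [← h]
    congr 1; funext j; congr 1; funext i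
    rw [Complex.normSq_eq_conj_mul_self]; rfl
  rw [Complex.ofReal_eq_zero] at h2
  ext i j
  have h3 := (Finset.sum_eq_zero_iff_of_nonneg
    (fun j _ => Finset.sum_nonneg fun i _ => Complex.normSq_nonneg _)).mp h2 j (Finset.mem_univ j)
  have h4 := (Finset.sum_eq_zero_iff_of_nonneg
    (fun i _ => Complex.normSq_nonneg _)).mp h3 i (Finset.mem_univ i)
  simpa using Complex.normSq_eq_zero.mp h4

/-! ### Auxiliary lemmas about `tensorFamily` and `reduceSingle` -/

section TF
variable {N : ℕ} {D : Fin N → ℕ}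

lemma tensorFamily_mul (A B : ∀ k, Matrix (Fin (D k)) (Fin (D k)) ℂ) :
    tensorFamily A * tensorFamily B = tensorFamily (fun k => A k * B k) := by
  ext a a'
  show ∑ b : ∀ k, Fin (D k), (∏ k, A k (a k) (b k)) * ∏ k, B k (b k) (a' k)
      = ∏ k, (A k * B k) (a k) (a' k)
  simp_rw [Matrix.mul_apply, Finset.prod_univ_sum, Fintype.piFinset_univ,
    ← Finset.prod_mul_distrib]

lemma tensorFamily_one :
    tensorFamily (fun k => (1 : Matrix (Fin (D k)) (Fin (D k)) ℂ)) = 1 := by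
  ext a a'
  simp only [tensorFamily, Matrix.one_apply]
  by_cases h : a = a'
  · subst h; simp
  · rw [if_neg h]
    obtain ⟨k, hk⟩ : ∃ k, a k ≠ a' k := by
      by_contra hc; push_neg at hc; exact h (funext hc)
    exact Finset.prod_eq_zero (Finset.mem_univ k) (by simp [hk])

lemma tensorFamily_conjTranspose (A : ∀ k, Matrix (Fin (D k)) (Fin (D k)) ℂ) :
    (tensorFamily A)ᴴ = tensorFamily (fun k => (A k)ᴴ) := by
  ext a a'
  simp only [tensorFamily, Matrix.conjTranspose_apply]
  rw [show (star : ℂ → ℂ) = (starRingEnd ℂ) from rfl, map_prod]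

lemma insertAt_eq (k : Fin N) (x : Fin (D k)) (b : ∀ l : {l : Fin N // l ≠ k}, Fin (D l.1)) :
    (fun l => if h : l = k then cast (congrArg (fun i => Fin (D i)) h.symm) x else b ⟨l, h⟩)
      = (Equiv.piSplitAt k (fun l => Fin (D l))).symm (x, b) := by
  funext l
  simp only [Equiv.piSplitAt_symm_apply]
  by_cases h : l = k
  · subst h; simp
  · simp [h]

lemma reduceSingle_eq (k : Fin N) (M : Matrix (∀ l, Fin (D l)) (∀ l, Fin (D l)) ℂ)
    (x x' : Fin (D k)) :
    reduceSingle k M x x' = ∑ b : ∀ l : {l : Fin N // l ≠ k}, Fin (D l.1),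
      M ((Equiv.piSplitAt k (fun l => Fin (D l))).symm (x, b))
        ((Equiv.piSplitAt k (fun l => Fin (D l))).symm (x', b)) := by
  unfold reduceSingle
  simp_rw [insertAt_eq]

lemma trace_reduceSingle (k : Fin N) (M : Matrix (∀ l, Fin (D l)) (∀ l, Fin (D l)) ℂ) :
    (reduceSingle k M).trace = M.trace := by
  classical
  simp only [Matrix.trace, Matrix.diag_apply, reduceSingle_eq]
  rw [← Equiv.sum_comp (Equiv.piSplitAt k fun l => Fin (D l)).symm (fun a => M a a),
    Fintype.sum_prod_type]

lemma reduceSingle_isHermitian {M : Matrix (∀ l, Fin (D l)) (∀ l, Fin (D l)) ℂ}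
    (hM : M.IsHermitian) (k : Fin N) : (reduceSingle k M).IsHermitian := by
  refine Matrix.ext fun x y => ?_
  simp only [Matrix.conjTranspose_apply, reduceSingle_eq, star_sum]
  exact Finset.sum_congr rfl fun b _ => hM.apply _ _

lemma prod_ite_eq_delta {I : Type*} [Fintype I] {κ : I → Type*} [∀ i, DecidableEq (κ i)]
    (f g : ∀ i, κ i) :
    (∏ i, if f i = g i then (1:ℂ) else 0) = if f = g then 1 else 0 := by
  classical
  by_cases h : f = g
  · subst h; simp
  · rw [if_neg h]
    obtain ⟨i, hi⟩ : ∃ i, f i ≠ g i := by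
      by_contra hc; push_neg at hc; exact h (funext hc)
    exact Finset.prod_eq_zero (Finset.mem_univ i) (by simp [hi])

lemma symm_apply_fst (k : Fin N) (p : Fin (D k) × ∀ l : {l : Fin N // l ≠ k}, Fin (D l.1)) :
    (Equiv.piSplitAt k (fun l => Fin (D l))).symm p k = p.1 := by
  simp

lemma symm_apply_snd (k : Fin N) (p : Fin (D k) × ∀ l : {l : Fin N // l ≠ k}, Fin (D l.1))
    (j : {l : Fin N // l ≠ k}) :
    (Equiv.piSplitAt k (fun l => Fin (D l))).symm p j.1 = p.2 j := by
  rcases j with ⟨j, hj⟩; simp [hj]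

lemma trace_mul_tensorSingle (k : Fin N) (M : Matrix (∀ l, Fin (D l)) (∀ l, Fin (D l)) ℂ)
    (P : Matrix (Fin (D k)) (Fin (D k)) ℂ) :
    (M * tensorFamily (Function.update (fun l => (1 : Matrix (Fin (D l)) (Fin (D l)) ℂ)) k P)).trace
      = (reduceSingle k M * P).trace := by
  classical
  have hE : ∀ a b : ∀ l, Fin (D l),
      tensorFamily (Function.update (fun l => (1 : Matrix (Fin (D l)) (Fin (D l)) ℂ)) k P) b a
      = P (b k) (a k) * ∏ j : {l : Fin N // l ≠ k}, (if b j.1 = a j.1 then (1:ℂ) else 0) := by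
    intro a b
    unfold tensorFamily
    rw [← Finset.mul_prod_erase Finset.univ _ (Finset.mem_univ k), Function.update_self]
    congr 1
    rw [Finset.prod_subtype (Finset.univ.erase k) (p := fun l => l ≠ k) (fun l => by simp)]
    exact Finset.prod_congr rfl fun j _ => by
      rw [Function.update_of_ne j.2, Matrix.one_apply]
  have step1 : ∀ (G : (∀ l, Fin (D l)) → ℂ), (∑ a, G a)
      = ∑ x : Fin (D k), ∑ f : (∀ l : {l : Fin N // l ≠ k}, Fin (D l.1)),
          G ((Equiv.piSplitAt k (fun l => Fin (D l))).symm (x, f)) := by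
    intro G
    rw [← Equiv.sum_comp (Equiv.piSplitAt k (fun l => Fin (D l))).symm G, Fintype.sum_prod_type]
  simp only [Matrix.trace, Matrix.diag_apply, Matrix.mul_apply, hE, reduceSingle_eq]
  simp only [step1, symm_apply_fst, symm_apply_snd, prod_ite_eq_delta, mul_ite, mul_zero, mul_one,
    Finset.sum_ite_eq', Finset.mem_univ, if_true, Finset.sum_mul]
  exact Finset.sum_congr rfl fun x _ => Finset.sum_comm

/-! ### The key absorption lemma -/

lemma E_absorb {ϱ : Matrix (∀ l, Fin (D l)) (∀ l, Fin (D l)) ℂ}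
    (hϱ : IsDensityMatrix ϱ) (k : Fin N) :
    ϱ * tensorFamily (Function.update (fun l => (1 : Matrix (Fin (D l)) (Fin (D l)) ℂ)) k
        (suppProj (reduceSingle k ϱ))) = ϱ ∧
    tensorFamily (Function.update (fun l => (1 : Matrix (Fin (D l)) (Fin (D l)) ℂ)) k
        (suppProj (reduceSingle k ϱ))) * ϱ = ϱ := by
  classical
  have hH : (reduceSingle k ϱ).IsHermitian := reduceSingle_isHermitian hϱ.1.1 k
  set E := tensorFamily (Function.update (fun l => (1 : Matrix (Fin (D l)) (Fin (D l)) ℂ)) k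
    (suppProj (reduceSingle k ϱ))) with hEdef
  have hEH : Eᴴ = E := by
    rw [hEdef, tensorFamily_conjTranspose]
    have harg : (fun l => ((Function.update (fun l' => (1 : Matrix (Fin (D l')) (Fin (D l')) ℂ)) k
        (suppProj (reduceSingle k ϱ))) l)ᴴ)
        = Function.update (fun l' => (1 : Matrix (Fin (D l')) (Fin (D l')) ℂ)) k
            (suppProj (reduceSingle k ϱ)) := by
      funext l
      rcases eq_or_ne l k with h | h
      · subst h; simp [(suppProj_isHermitian hH).eq]
      · simp [Function.update_of_ne h]
    rw [harg]
  have hEE : E * E = E := by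
    rw [hEdef, tensorFamily_mul]
    have harg : (fun l => (Function.update (fun l' => (1 : Matrix (Fin (D l')) (Fin (D l')) ℂ)) k
        (suppProj (reduceSingle k ϱ))) l * (Function.update
          (fun l' => (1 : Matrix (Fin (D l')) (Fin (D l')) ℂ)) k (suppProj (reduceSingle k ϱ))) l)
        = Function.update (fun l' => (1 : Matrix (Fin (D l')) (Fin (D l')) ℂ)) k
            (suppProj (reduceSingle k ϱ)) := by
      funext l
      rcases eq_or_ne l k with h | h
      · subst h
        simp [suppProj_mul_self hH]
      · simp [Function.update_of_ne h]
    rw [harg]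
  have htr : (ϱ * E).trace = 1 := by
    rw [hEdef, trace_mul_tensorSingle, mul_suppProj hH, trace_reduceSingle]
    exact hϱ.2
  set Q := 1 - E with hQdef
  have hQH : Qᴴ = Q := by
    rw [hQdef, Matrix.conjTranspose_sub, Matrix.conjTranspose_one, hEH]
  have hQQ : Q * Q = Q := by
    rw [hQdef, Matrix.sub_mul, Matrix.one_mul, Matrix.mul_sub, Matrix.mul_one, hEE, sub_self,
      sub_zero]
  have hQPSD : (Q * ϱ * Q).PosSemidef := by
    have := hϱ.1.mul_mul_conjTranspose_same Q
    rwa [hQH] at this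
  have htrQ : (Q * ϱ * Q).trace = 0 := by
    rw [Matrix.trace_mul_cycle, hQQ, hQdef, Matrix.sub_mul, Matrix.one_mul, Matrix.trace_sub,
      Matrix.trace_mul_comm, htr, hϱ.2, sub_self]
  have h0 : Q * ϱ * Q = 0 := psd_trace_eq_zero hQPSD htrQ
  have hQ0 : ϱ * Q = 0 := by
    obtain ⟨B, hB⟩ : ∃ B : Matrix (∀ l, Fin (D l)) (∀ l, Fin (D l)) ℂ, ϱ = Bᴴ * B := by
      open scoped MatrixOrder in
      obtain ⟨B, hB⟩ := CStarAlgebra.nonneg_iff_eq_star_mul_self.mp hϱ.1.nonneg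
      exact ⟨B, by rw [hB, Matrix.star_eq_conjTranspose]⟩
    have hBQ : (B * Q)ᴴ * (B * Q) = Q * ϱ * Q := by
      rw [Matrix.conjTranspose_mul, hQH, hB]
      simp only [Matrix.mul_assoc]
    have hBQ0 : B * Q = 0 := Matrix.conjTranspose_mul_self_eq_zero.mp (hBQ.trans h0)
    rw [hB, Matrix.mul_assoc, hBQ0, Matrix.mul_zero]
  have hright : ϱ * E = ϱ := by
    rw [hQdef, Matrix.mul_sub, Matrix.mul_one, sub_eq_zero] at hQ0
    exact hQ0.symm
  have hleft : E * ϱ = ϱ := by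
    have hc := congrArg Matrix.conjTranspose hright
    rwa [Matrix.conjTranspose_mul, hEH, hϱ.1.1.eq] at hc
  exact ⟨hright, hleft⟩

lemma tensor_absorb {ϱ : Matrix (∀ l, Fin (D l)) (∀ l, Fin (D l)) ℂ}
    (hϱ : IsDensityMatrix ϱ) (S : Finset (Fin N)) :
    tensorFamily (fun l => if l ∈ S then suppProj (reduceSingle l ϱ) else 1) * ϱ = ϱ := by
  classical
  induction S using Finset.induction_on with
  | empty => simp only [Finset.notMem_empty, if_false, tensorFamily_one, Matrix.one_mul]
  | @insert k S hk ih =>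
    have hfun : (fun l => if l ∈ insert k S then suppProj (reduceSingle l ϱ) else 1)
        = fun l => Function.update (fun l' => (1 : Matrix (Fin (D l')) (Fin (D l')) ℂ)) k
            (suppProj (reduceSingle k ϱ)) l *
          (if l ∈ S then suppProj (reduceSingle l ϱ) else 1) := by
      funext l
      by_cases h : l = k
      · subst h
        rw [Function.update_self, if_pos (Finset.mem_insert_self l S), if_neg hk,
          Matrix.mul_one]
      · rw [Function.update_of_ne h, Matrix.one_mul]
        simp [Finset.mem_insert, h]
    rw [hfun, ← tensorFamily_mul, Matrix.mul_assoc, ih]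
    exact (E_absorb hϱ k).2

end TF

/-- A density matrix is invariant under conjugation by the tensor product of the
support projectors of its single-party reductions. -/
theorem stmt_4 {N : ℕ} {D : Fin N → ℕ}
    (ϱ : Matrix (∀ k, Fin (D k)) (∀ k, Fin (D k)) ℂ) (hϱ : IsDensityMatrix ϱ) :
    tensorFamily (fun k => suppProj (reduceSingle k ϱ)) * ϱ *
      tensorFamily (fun k => suppProj (reduceSingle k ϱ)) = ϱ := by
  classical
  have hT : tensorFamily (fun k => suppProj (reduceSingle k ϱ)) * ϱ = ϱ := by
    have h := tensor_absorb hϱ Finset.univ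
    simpa using h
  have hTH : (tensorFamily (fun k => suppProj (reduceSingle k ϱ)))ᴴ
      = tensorFamily (fun k => suppProj (reduceSingle k ϱ)) := by
    rw [tensorFamily_conjTranspose]
    have harg : (fun k => (suppProj (reduceSingle k ϱ))ᴴ)
        = fun k => suppProj (reduceSingle k ϱ) :=
      funext fun k => (suppProj_isHermitian (reduceSingle_isHermitian hϱ.1.1 k)).eq
    rw [harg]
  have hT2 : ϱ * tensorFamily (fun k => suppProj (reduceSingle k ϱ)) = ϱ := by
    have hc := congrArg Matrix.conjTranspose hT
    rwa [Matrix.conjTranspose_mul, hTH, hϱ.1.1.eq] at hc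
  rw [hT, hT2]
end
end

section
/- Fidelity formula in the spin-spin model: let λ ∈ [0,1], α, β, γ ∈ ℝ, let R(α,β,γ) = exp(−iα σ_z/2)·exp(−iβ σ_y/2)·exp(−iγ σ_z/2), and let ρ₀ = R(α,β,γ) · diag(λ, 1−λ) · R(α,β,γ)†. Then for every θ ∈ ℝ, the fidelity between ρ₀ and its rotated version satisfies F(ρ₀, exp(−iθσ_z) ρ₀ exp(iθσ_z)) = √(1 − (2λ−1)² sin²β sin²θ). -/
open scoped Kronecker Matrix ComplexOrder BigOperators
open Matrix

noncomputable section

open scoped Classical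

/-- The positive semidefinite square root of a positive semidefinite matrix
(junk value `0` on non-PSD input). -/
def msqrt {n : Type*} [Fintype n] [DecidableEq n] (A : Matrix n n ℂ) : Matrix n n ℂ :=
  if h : A.PosSemidef then (h.1.eigenvectorUnitary : Matrix n n ℂ) *
    diagonal ((↑) ∘ Real.sqrt ∘ h.1.eigenvalues) * (star h.1.eigenvectorUnitary : Matrix n n ℂ)
  else 0

/-- The fidelity `F(ρ,σ) = tr √(√ρ σ √ρ)` of positive semidefinite matrices. -/
def fidelity {n : Type*} [Fintype n] [DecidableEq n] (ρ σ : Matrix n n ℂ) : ℂ :=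
  (msqrt (msqrt ρ * σ * msqrt ρ)).trace

/-- The Pauli `y` matrix. -/
def σy : Matrix (Fin 2) (Fin 2) ℂ := !![0, -Complex.I; Complex.I, 0]

/-- The Pauli `z` matrix. -/
def σz : Matrix (Fin 2) (Fin 2) ℂ := !![1, 0; 0, -1]

/-- The Euler-angle parametrization of `SU(2)`:
`R(α,β,γ) = exp(−iασ_z/2) exp(−iβσ_y/2) exp(−iγσ_z/2)`. -/
def eulerR (α β γ : ℝ) : Matrix (Fin 2) (Fin 2) ℂ :=
  NormedSpace.exp ((-(Complex.I * (α : ℂ) / 2)) • σz) *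
  NormedSpace.exp ((-(Complex.I * (β : ℂ) / 2)) • σy) *
  NormedSpace.exp ((-(Complex.I * (γ : ℂ) / 2)) • σz)

/-! ### Auxiliary material -/

open scoped MatrixOrder

lemma msqrt_eq_cfc {n : Type*} [Fintype n] [DecidableEq n] {A : Matrix n n ℂ}
    (hA : A.PosSemidef) : msqrt A = CFC.sqrt A := by
  have h0 : 0 ≤ A := Matrix.nonneg_iff_posSemidef.mpr hA
  rw [CFC.sqrt_eq_real_sqrt A h0, cfcₙ_eq_cfc, Matrix.IsHermitian.cfc_eq hA.1, msqrt, dif_pos hA]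
  rfl

lemma eq_msqrt_of_sq_eq {n : Type*} [Fintype n] [DecidableEq n] {S A : Matrix n n ℂ}
    (hS : S.PosSemidef) (hA : A.PosSemidef) (h : S ^ 2 = A) : S = msqrt A := by
  rw [msqrt_eq_cfc hA]
  exact (CFC.sqrt_unique (by rw [← sq]; exact h) (Matrix.nonneg_iff_posSemidef.mpr hS)).symm

lemma cexpI (r : ℝ) : Complex.exp (Complex.I * r) =
    (Real.cos r : ℂ) + (Real.sin r : ℂ) * Complex.I := by
  rw [mul_comm, Complex.exp_mul_I, ← Complex.ofReal_cos, ← Complex.ofReal_sin]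

lemma cexpI' (r : ℝ) : Complex.exp (-(Complex.I * r)) =
    (Real.cos r : ℂ) - (Real.sin r : ℂ) * Complex.I := by
  have h : -(Complex.I * r) = Complex.I * ((-r : ℝ) : ℂ) := by push_cast; ring
  rw [h, cexpI]
  push_cast [Real.cos_neg, Real.sin_neg]
  ring

/-- `Zm r = exp(-i r σz)` as an explicit diagonal matrix. -/
def Zm (r : ℝ) : Matrix (Fin 2) (Fin 2) ℂ :=
  Matrix.diagonal ![Complex.exp (-(Complex.I * r)), Complex.exp (Complex.I * r)]

/-- `Ym r = exp(-i r σy)` as an explicit rotation matrix. -/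
def Ym (r : ℝ) : Matrix (Fin 2) (Fin 2) ℂ :=
  !![(Real.cos r : ℂ), -(Real.sin r : ℂ); (Real.sin r : ℂ), (Real.cos r : ℂ)]

lemma Zm_mul (r s : ℝ) : Zm r * Zm s = Zm (r + s) := by
  rw [Zm, Zm, Zm, Matrix.diagonal_mul_diagonal]
  ext i j
  fin_cases i <;> fin_cases j <;>
    simp [Matrix.diagonal_apply, ← Complex.exp_add] <;> (congr 1; push_cast; ring)

lemma Zm_mul_assoc (r s : ℝ) (A : Matrix (Fin 2) (Fin 2) ℂ) :
    Zm r * (Zm s * A) = Zm (r + s) * A := by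
  rw [← Matrix.mul_assoc, Zm_mul]

lemma Zm_zero : Zm 0 = 1 := by
  rw [Zm]
  ext i j
  fin_cases i <;> fin_cases j <;> simp [Matrix.one_apply]

lemma Zm_conjTranspose (r : ℝ) : (Zm r)ᴴ = Zm (-r) := by
  rw [Zm, Zm, Matrix.diagonal_conjTranspose]
  ext i j
  fin_cases i <;> fin_cases j <;>
    simp [Matrix.diagonal_apply, Pi.star_apply, Complex.star_def, ← Complex.exp_conj,
      map_neg, _root_.map_mul, Complex.conj_I, Complex.conj_ofReal]

lemma Zm_det (r : ℝ) : (Zm r).det = 1 := by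
  rw [Zm, Matrix.det_diagonal, Fin.prod_univ_two]
  simp [← Complex.exp_add]

lemma Zm_diag_comm (r : ℝ) (v : Fin 2 → ℂ) :
    Zm r * Matrix.diagonal v = Matrix.diagonal v * Zm r := by
  have h : (fun i => ![Complex.exp (-(Complex.I * r)), Complex.exp (Complex.I * r)] i * v i)
      = fun i => v i * ![Complex.exp (-(Complex.I * r)), Complex.exp (Complex.I * r)] i :=
    funext fun i => mul_comm _ _
  rw [Zm, Matrix.diagonal_mul_diagonal, Matrix.diagonal_mul_diagonal, h]

lemma expZc (c : ℂ) : NormedSpace.exp (c • σz) =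
    Matrix.diagonal ![Complex.exp c, Complex.exp (-c)] := by
  have h : c • σz = Matrix.diagonal ![c, -c] := by
    ext i j
    fin_cases i <;> fin_cases j <;> simp [σz, Matrix.diagonal]
  rw [h, Matrix.exp_diagonal]
  ext i j
  fin_cases i <;> fin_cases j <;>
    simp [Matrix.diagonal, Pi.exp_def, Complex.exp_eq_exp_ℂ]

lemma expYc (c : ℂ) : NormedSpace.exp (c • σy) =
    !![(Complex.exp c + Complex.exp (-c))/2,
       Complex.I * (Complex.exp (-c) - Complex.exp c)/2;
       Complex.I * (Complex.exp c - Complex.exp (-c))/2,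
       (Complex.exp c + Complex.exp (-c))/2] := by
  set P : Matrix (Fin 2) (Fin 2) ℂ := !![1, 1; Complex.I, -Complex.I] with hP
  set Q : Matrix (Fin 2) (Fin 2) ℂ := !![1/2, -Complex.I/2; 1/2, Complex.I/2] with hQ
  have hPQ : P * Q = 1 := by
    ext i j
    fin_cases i <;> fin_cases j <;>
      simp [hP, hQ, Matrix.mul_apply, Fin.sum_univ_two, Matrix.one_apply] <;> ring_nf <;>
      simp [Complex.I_sq] <;> ring
  have hPinv : P⁻¹ = Q := inv_eq_right_inv hPQ
  have hPunit : IsUnit P := by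
    have hdet : P.det = -(2*Complex.I) := by
      simp [hP, Matrix.det_fin_two_of]; ring
    rw [Matrix.isUnit_iff_isUnit_det, hdet, isUnit_iff_ne_zero]
    simpa using Complex.I_ne_zero
  have hconj : c • σy = P * (c • σz) * P⁻¹ := by
    rw [hPinv]
    ext i j
    fin_cases i <;> fin_cases j <;>
      simp [hP, hQ, σy, σz, Matrix.mul_apply, Fin.sum_univ_two] <;> ring_nf <;>
      simp [Complex.I_sq] <;> ring
  rw [hconj, Matrix.exp_conj P (c • σz) hPunit, expZc, hPinv]
  ext i j
  fin_cases i <;> fin_cases j <;>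
    simp [hP, hQ, Matrix.mul_apply, Fin.sum_univ_two, Matrix.diagonal_apply,
      Matrix.vecMul_diagonal, Matrix.mul_diagonal] <;> ring_nf <;>
    simp [Complex.I_sq] <;> ring

lemma expZr (r : ℝ) : NormedSpace.exp ((-(Complex.I * (r : ℂ))) • σz) = Zm r := by
  rw [expZc, Zm, neg_neg]

lemma expZr' (r : ℝ) : NormedSpace.exp ((Complex.I * (r : ℂ)) • σz) = Zm (-r) := by
  have h : Complex.I * (r : ℂ) = -(Complex.I * ((-r : ℝ) : ℂ)) := by push_cast; ring
  rw [h, expZr]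

lemma expYr (r : ℝ) : NormedSpace.exp ((-(Complex.I * (r : ℂ))) • σy) = Ym r := by
  rw [expYc, Ym, neg_neg, cexpI, cexpI']
  ext i j
  fin_cases i <;> fin_cases j <;> simp <;> ring_nf <;> simp [Complex.I_sq] <;> ring

lemma Zm_eq (r : ℝ) : Zm r = !![(Real.cos r : ℂ) - (Real.sin r : ℂ) * Complex.I, 0;
    0, (Real.cos r : ℂ) + (Real.sin r : ℂ) * Complex.I] := by
  rw [Zm, cexpI, cexpI']
  ext i j
  fin_cases i <;> fin_cases j <;> simp [Matrix.diagonal_apply]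

lemma Nexp (r : ℝ) (L : ℂ) : Ym r * Matrix.diagonal ![L, 1 - L] * (Ym r)ᴴ =
    !![L * (Real.cos r : ℂ)^2 + (1-L) * (Real.sin r : ℂ)^2,
       (2*L-1) * (Real.cos r : ℂ) * (Real.sin r : ℂ);
       (2*L-1) * (Real.cos r : ℂ) * (Real.sin r : ℂ),
       L * (Real.sin r : ℂ)^2 + (1-L) * (Real.cos r : ℂ)^2] := by
  ext i j
  fin_cases i <;> fin_cases j <;>
    simp [Ym, Matrix.mul_apply, Fin.sum_univ_two, Matrix.conjTranspose_apply,
      Matrix.diagonal_apply, Matrix.mul_diagonal, Matrix.vecMul_diagonal,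
      Complex.conj_ofReal, -Complex.ofReal_cos, -Complex.ofReal_sin] <;> ring

set_option maxHeartbeats 1000000 in
lemma trace_formula (lam β θ : ℝ) :
    (Ym (β/2) * Matrix.diagonal ![(lam : ℂ), 1 - lam] * (Ym (β/2))ᴴ * Zm θ *
     (Ym (β/2) * Matrix.diagonal ![(lam : ℂ), 1 - lam] * (Ym (β/2))ᴴ) * Zm (-θ)).trace =
    ((1 - (2*lam-1)^2 * (2 * Real.sin (β/2) * Real.cos (β/2))^2 * Real.sin θ ^2
      - 2*(lam*(1-lam)) : ℝ) : ℂ) := by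
  have hb : ((Real.cos (β/2) : ℂ))^2 + ((Real.sin (β/2) : ℂ))^2 = 1 := by
    have := Real.cos_sq_add_sin_sq (β/2)
    exact_mod_cast congrArg (Complex.ofReal) this
  have ht : ((Real.cos θ : ℂ))^2 + ((Real.sin θ : ℂ))^2 = 1 := by
    have := Real.cos_sq_add_sin_sq θ
    exact_mod_cast congrArg (Complex.ofReal) this
  have hI : (Complex.I)^2 = -1 := Complex.I_sq
  rw [Nexp, Zm_eq, Zm_eq]
  rw [Real.cos_neg, Real.sin_neg]
  simp only [Matrix.trace_fin_two, Matrix.mul_apply, Fin.sum_univ_two]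
  push_cast [-Complex.ofReal_cos, -Complex.ofReal_sin]
  simp only [Matrix.cons_val', Matrix.cons_val_zero, Matrix.cons_val_one, Matrix.head_cons,
    Matrix.empty_val', Matrix.cons_val_fin_one, Matrix.head_fin_const, Matrix.of_apply]
  set L : ℂ := (lam : ℂ)
  set c : ℂ := ((Real.cos (β/2) : ℝ) : ℂ)
  set s : ℂ := ((Real.sin (β/2) : ℝ) : ℂ)
  set st : ℂ := ((Real.sin θ : ℝ) : ℂ)
  linear_combination ((1 + s^2 + c^2) * (2*L^2 - 2*L + 1)) * hb
    + ((s^2 + c^2)^2 * (2*L^2 - 2*L + 1)) * ht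
    + (st^2 * (-(2*L^2 - 2*L + 1)*(s^4 + c^4) + (12*L^2 - 12*L + 2)*c^2*s^2)) * hI

lemma smul_posSemidef {n : Type*} [Fintype n] {c : ℝ} (hc : 0 ≤ c)
    {M : Matrix n n ℂ} (hM : M.PosSemidef) : ((c : ℂ) • M).PosSemidef := by
  constructor
  · unfold Matrix.IsHermitian
    rw [Matrix.conjTranspose_smul, hM.1.eq]
    congr 1
    simp [Complex.star_def, Complex.conj_ofReal]
  · intro x
    have h0 : 0 ≤ (c : ℂ) := by exact_mod_cast Complex.zero_le_real.mpr hc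
    exact (hM.smul h0).2 x

lemma cayley2 (M : Matrix (Fin 2) (Fin 2) ℂ) :
    M * M = M.trace • M - M.det • (1 : Matrix (Fin 2) (Fin 2) ℂ) := by
  ext i j
  fin_cases i <;> fin_cases j <;>
    simp [Matrix.mul_apply, Fin.sum_univ_two, Matrix.trace_fin_two, Matrix.det_fin_two,
      Matrix.one_apply] <;> ring

lemma psd_trace_zero {M : Matrix (Fin 2) (Fin 2) ℂ} (hM : M.PosSemidef)
    (h : M.trace = 0) : M = 0 := by
  obtain ⟨B, hB⟩ : ∃ B : Matrix (Fin 2) (Fin 2) ℂ, M = Bᴴ * B :=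
    ⟨CFC.sqrt M, by
      rw [(Matrix.nonneg_iff_posSemidef.mp (CFC.sqrt_nonneg M)).isHermitian.eq,
        CFC.sqrt_mul_sqrt_self M (Matrix.nonneg_iff_posSemidef.mpr hM)]⟩
  subst hB
  have htr : (Bᴴ * B).trace = ∑ j : Fin 2, ∑ i : Fin 2, (Complex.normSq (B i j) : ℂ) := by
    simp [Matrix.trace, Matrix.diag, Matrix.mul_apply, Matrix.conjTranspose_apply,
      Complex.normSq_eq_conj_mul_self]
  rw [htr] at h
  have h' : ∑ j : Fin 2, ∑ i : Fin 2, Complex.normSq (B i j) = 0 := by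
    exact_mod_cast h
  have hzero : ∀ i j, B i j = 0 := by
    intro i j
    have hnn : ∀ j' ∈ Finset.univ, (0:ℝ) ≤ ∑ i' : Fin 2, Complex.normSq (B i' j') :=
      fun j' _ => Finset.sum_nonneg fun i' _ => Complex.normSq_nonneg _
    have h1 := (Finset.sum_eq_zero_iff_of_nonneg hnn).mp h' j (Finset.mem_univ j)
    have h2 := (Finset.sum_eq_zero_iff_of_nonneg
      (fun i' _ => Complex.normSq_nonneg (B i' j))).mp h1 i (Finset.mem_univ i)
    exact Complex.normSq_eq_zero.mp h2
  have hB0 : B = 0 := by ext i j; exact hzero i j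
  simp [hB0]

lemma fid2 {M : Matrix (Fin 2) (Fin 2) ℂ} (hM : M.PosSemidef) (p q : ℝ)
    (hp : M.trace = (p : ℂ)) (hq : M.det = (q : ℂ)) (hp0 : 0 ≤ p) (hq0 : 0 ≤ q) :
    (msqrt M).trace = (Real.sqrt (p + 2 * Real.sqrt q) : ℂ) := by
  set t : ℝ := Real.sqrt (p + 2 * Real.sqrt q) with htdef
  have hqs : 0 ≤ Real.sqrt q := Real.sqrt_nonneg q
  have harg : 0 ≤ p + 2 * Real.sqrt q := by linarith
  have ht2 : t ^ 2 = p + 2 * Real.sqrt q := Real.sq_sqrt harg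
  have hqq : ((Real.sqrt q : ℝ) : ℂ) ^ 2 = (q : ℂ) := by
    rw [← Complex.ofReal_pow, Real.sq_sqrt hq0]
  rcases eq_or_lt_of_le (Real.sqrt_nonneg (p + 2 * Real.sqrt q)) with h0 | hpos
  · have ht0 : t = 0 := h0.symm
    have hparg : p + 2 * Real.sqrt q = 0 := by
      have h := ht2; rw [ht0] at h; linarith [h.symm]
    have hp' : p = 0 := by linarith
    have hM0 : M = 0 := psd_trace_zero hM (by rw [hp, hp']; norm_num)
    have hsq : (0 : Matrix (Fin 2) (Fin 2) ℂ) = msqrt M := by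
      refine eq_msqrt_of_sq_eq ?_ hM ?_
      · simpa [hM0] using hM
      · simp [hM0]
    rw [← hsq, ht0]
    simp
  · set S : Matrix (Fin 2) (Fin 2) ℂ :=
      ((t⁻¹ : ℝ) : ℂ) • (M + ((Real.sqrt q : ℝ) : ℂ) • (1 : Matrix (Fin 2) (Fin 2) ℂ)) with hSdef
    have hSpsd : S.PosSemidef := by
      apply smul_posSemidef (inv_nonneg.mpr (le_of_lt hpos))
      exact hM.add (smul_posSemidef hqs (Matrix.PosSemidef.one))
    have ht2c : ((t : ℝ) : ℂ) ^ 2 = (p : ℂ) + 2 * ((Real.sqrt q : ℝ) : ℂ) := by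
      rw [← Complex.ofReal_pow, ht2]; push_cast; ring
    have htne : ((t : ℝ) : ℂ) ≠ 0 := by
      simpa using ne_of_gt hpos
    have hS2 : S ^ 2 = M := by
      rw [sq, hSdef, smul_mul_smul_comm, add_mul, mul_add, mul_add, cayley2, hp, hq]
      have hq2 : ((Real.sqrt q : ℝ) : ℂ) * ((Real.sqrt q : ℝ) : ℂ) = (q : ℂ) := by
        rw [← Complex.ofReal_mul, Real.mul_self_sqrt hq0]
      simp only [Matrix.smul_mul, Matrix.mul_smul, one_mul, mul_one, smul_smul,
        smul_mul_smul_comm, hq2]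
      have hpt : ((p : ℝ) : ℂ) = ((t : ℝ) : ℂ) * ((t : ℝ) : ℂ) - 2 * ((Real.sqrt q : ℝ) : ℂ) := by
        linear_combination -ht2c
      rw [hpt]
      have htinv : ((t⁻¹ : ℝ) : ℂ) = (((t : ℝ) : ℂ))⁻¹ := by push_cast; ring
      rw [htinv]
      match_scalars <;> (field_simp; try ring)
    have hSsqrt : S = msqrt M := eq_msqrt_of_sq_eq hSpsd hM hS2
    rw [← hSsqrt, hSdef]
    rw [Matrix.trace_smul, Matrix.trace_add, Matrix.trace_smul, Matrix.trace_one, hp]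
    have hcard : (Fintype.card (Fin 2) : ℂ) = 2 := by simp
    rw [hcard]
    have htinv : ((t⁻¹ : ℝ) : ℂ) = (((t : ℝ) : ℂ))⁻¹ := by push_cast; ring
    rw [smul_eq_mul, htinv, inv_mul_eq_iff_eq_mul₀ htne]
    simp only [smul_eq_mul]
    linear_combination -ht2c

/-- Fidelity formula in the spin-spin model:
`F(ρ₀, e^{−iθσ_z} ρ₀ e^{iθσ_z}) = √(1 − (2λ−1)² sin²β sin²θ)`. -/
theorem stmt_17 (lam α β γ θ : ℝ) (hlam : lam ∈ Set.Icc (0 : ℝ) 1)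
    (ρ₀ : Matrix (Fin 2) (Fin 2) ℂ)
    (hρ₀ : ρ₀ = eulerR α β γ * Matrix.diagonal ![(lam : ℂ), 1 - (lam : ℂ)] *
      (eulerR α β γ)ᴴ) :
    fidelity ρ₀ (NormedSpace.exp ((-(Complex.I * (θ : ℂ))) • σz) * ρ₀ *
        NormedSpace.exp ((Complex.I * (θ : ℂ)) • σz)) =
      (Real.sqrt (1 - (2 * lam - 1) ^ 2 * Real.sin β ^ 2 * Real.sin θ ^ 2) : ℂ) := by
  obtain ⟨hl0, hl1⟩ := hlam
  set D : Matrix (Fin 2) (Fin 2) ℂ := Matrix.diagonal ![(lam : ℂ), 1 - (lam : ℂ)] with hD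
  set N : Matrix (Fin 2) (Fin 2) ℂ := Ym (β/2) * D * (Ym (β/2))ᴴ with hN
  -- the Euler rotation in explicit form
  have heuler : eulerR α β γ = Zm (α/2) * Ym (β/2) * Zm (γ/2) := by
    rw [eulerR]
    have h1 : -(Complex.I * (α : ℂ) / 2) = -(Complex.I * ((α/2 : ℝ) : ℂ)) := by push_cast; ring
    have h2 : -(Complex.I * (β : ℂ) / 2) = -(Complex.I * ((β/2 : ℝ) : ℂ)) := by push_cast; ring
    have h3 : -(Complex.I * (γ : ℂ) / 2) = -(Complex.I * ((γ/2 : ℝ) : ℂ)) := by push_cast; ring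
    rw [h1, h2, h3, expZr, expYr, expZr]
  -- normal form of ρ₀
  have hρform : ρ₀ = Zm (α/2) * N * Zm (-(α/2)) := by
    rw [hρ₀, heuler, hN]
    rw [Matrix.conjTranspose_mul, Matrix.conjTranspose_mul, Zm_conjTranspose, Zm_conjTranspose]
    have hcollapse : Zm (γ/2) * D * Zm (-(γ/2)) = D := by
      rw [hD, Zm_diag_comm, Matrix.mul_assoc, Zm_mul]
      norm_num [Zm_zero]
    calc Zm (α/2) * Ym (β/2) * Zm (γ/2) * D * (Zm (-(γ/2)) * ((Ym (β/2))ᴴ * Zm (-(α/2))))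
        = Zm (α/2) * Ym (β/2) * (Zm (γ/2) * D * Zm (-(γ/2))) * ((Ym (β/2))ᴴ * Zm (-(α/2))) := by
          simp only [Matrix.mul_assoc]
      _ = Zm (α/2) * (Ym (β/2) * D * (Ym (β/2))ᴴ) * Zm (-(α/2)) := by
          rw [hcollapse]; simp only [Matrix.mul_assoc]
  -- ρ₀ is positive semidefinite
  have hDpsd : D.PosSemidef := by
    rw [hD]
    refine Matrix.posSemidef_diagonal_iff.mpr fun i => ?_
    fin_cases i
    · simpa using Complex.zero_le_real.mpr hl0
    · have : ((1 - lam : ℝ) : ℂ) = 1 - (lam : ℂ) := by push_cast; ring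
      simp only [Matrix.cons_val_one, Matrix.head_cons]
      rw [← this]
      exact Complex.zero_le_real.mpr (by linarith)
  have hρpsd : ρ₀.PosSemidef := by
    rw [hρ₀]
    exact hDpsd.mul_mul_conjTranspose_same (eulerR α β γ)
  -- the rotated state
  set σ' : Matrix (Fin 2) (Fin 2) ℂ := Zm θ * ρ₀ * Zm (-θ) with hσ'
  have hσeq : NormedSpace.exp ((-(Complex.I * (θ : ℂ))) • σz) * ρ₀ *
      NormedSpace.exp ((Complex.I * (θ : ℂ)) • σz) = σ' := by
    rw [expZr, expZr', hσ']
  have hσpsd : σ'.PosSemidef := by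
    rw [hσ', ← Zm_conjTranspose]
    exact hρpsd.mul_mul_conjTranspose_same (Zm θ)
  -- the square root of ρ₀
  have hmsqrtρ : msqrt ρ₀ = CFC.sqrt ρ₀ := msqrt_eq_cfc hρpsd
  set B : Matrix (Fin 2) (Fin 2) ℂ := CFC.sqrt ρ₀ with hB
  have hBherm : Bᴴ = B := (Matrix.nonneg_iff_posSemidef.mp (CFC.sqrt_nonneg ρ₀)).isHermitian
  have hBB : B * B = ρ₀ := CFC.sqrt_mul_sqrt_self ρ₀ (Matrix.nonneg_iff_posSemidef.mpr hρpsd)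
  set M : Matrix (Fin 2) (Fin 2) ℂ := B * σ' * B with hM
  have hMpsd : M.PosSemidef := by
    rw [hM]
    nth_rewrite 2 [← hBherm]
    exact hσpsd.mul_mul_conjTranspose_same B
  -- trace of M
  have htraceρσ : (ρ₀ * σ').trace = ((1 - (2*lam-1)^2 *
      (2 * Real.sin (β/2) * Real.cos (β/2))^2 * Real.sin θ ^2 - 2*(lam*(1-lam)) : ℝ) : ℂ) := by
    have hprod : ρ₀ * σ' = Zm (α/2) * (N * (Zm θ * (N * Zm (-(α/2) + -θ)))) := by
      rw [hσ', hρform]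
      simp only [Matrix.mul_assoc]
      rw [Zm_mul_assoc (-(α/2)) θ, Zm_mul_assoc (-(α/2) + θ) (α/2),
        show -(α/2) + θ + α/2 = θ by ring, Zm_mul (-(α/2)) (-θ)]
    rw [hprod, Matrix.trace_mul_comm]
    simp only [Matrix.mul_assoc]
    rw [Zm_mul (-(α/2) + -θ) (α/2), show -(α/2) + -θ + α/2 = -θ by ring]
    have := trace_formula lam β θ
    rw [hN, hD]
    simp only [Matrix.mul_assoc] at this ⊢
    exact this
  have htraceM : M.trace = ((1 - (2*lam-1)^2 *
      (2 * Real.sin (β/2) * Real.cos (β/2))^2 * Real.sin θ ^2 - 2*(lam*(1-lam)) : ℝ) : ℂ) := by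
    rw [hM, Matrix.trace_mul_cycle, hBB, htraceρσ]
  -- determinant of M
  have hdetρ : ρ₀.det = ((lam * (1 - lam) : ℝ) : ℂ) := by
    have hb : ((Real.cos (β/2) : ℂ))^2 + ((Real.sin (β/2) : ℂ))^2 = 1 := by
      have := Real.cos_sq_add_sin_sq (β/2)
      exact_mod_cast congrArg (Complex.ofReal) this
    have hdetN : N.det = ((lam * (1 - lam) : ℝ) : ℂ) := by
      rw [hN, Nexp, Matrix.det_fin_two_of]
      push_cast [-Complex.ofReal_cos, -Complex.ofReal_sin]
      linear_combination ((lam : ℂ) * (1 - (lam : ℂ)) *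
        (((Real.cos (β/2) : ℂ))^2 + ((Real.sin (β/2) : ℂ))^2 + 1)) * hb
    rw [hρform, Matrix.det_mul, Matrix.det_mul, Zm_det, Zm_det, hdetN]
    ring
  have hdetM : M.det = (((lam * (1 - lam))^2 : ℝ) : ℂ) := by
    have hdetσ : σ'.det = ((lam * (1 - lam) : ℝ) : ℂ) := by
      rw [hσ', Matrix.det_mul, Matrix.det_mul, Zm_det, Zm_det, hdetρ]
      ring
    have hdetBB : B.det * B.det = ρ₀.det := by
      rw [← Matrix.det_mul, hBB]
    rw [hM, Matrix.det_mul, Matrix.det_mul]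
    calc B.det * σ'.det * B.det = B.det * B.det * σ'.det := by ring
      _ = ρ₀.det * σ'.det := by rw [hdetBB]
      _ = (((lam * (1 - lam))^2 : ℝ) : ℂ) := by rw [hdetρ, hdetσ]; push_cast; ring
  -- assemble
  have hsinβ : Real.sin β = 2 * Real.sin (β/2) * Real.cos (β/2) := by
    have h := Real.sin_two_mul (β/2)
    rwa [show 2*(β/2) = β by ring] at h
  set p : ℝ := 1 - (2*lam-1)^2 * (2 * Real.sin (β/2) * Real.cos (β/2))^2 * Real.sin θ ^2
    - 2*(lam*(1-lam)) with hpdef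
  set q : ℝ := (lam * (1 - lam))^2 with hqdef
  have hp0 : 0 ≤ p := by
    rw [hpdef, ← hsinβ]
    have h1 : Real.sin β ^ 2 ≤ 1 := Real.sin_sq_le_one β
    have h2 : Real.sin θ ^ 2 ≤ 1 := Real.sin_sq_le_one θ
    have h3 : 0 ≤ Real.sin β ^ 2 := sq_nonneg _
    have h4 : 0 ≤ Real.sin θ ^ 2 := sq_nonneg _
    have h5 : (2*lam-1)^2 ≤ 1 := by nlinarith
    have h6 : 0 ≤ (2*lam-1)^2 := sq_nonneg _
    nlinarith [mul_nonneg h3 h4, mul_le_one₀ h1 h4 h2]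
  have hq0 : 0 ≤ q := sq_nonneg _
  have hsqrtq : Real.sqrt q = lam * (1 - lam) := by
    rw [hqdef]
    exact Real.sqrt_sq (mul_nonneg hl0 (by linarith))
  have hfid := fid2 hMpsd p q htraceM hdetM hp0 hq0
  rw [fidelity, hmsqrtρ, hσeq, ← hM, hfid]
  congr 1
  rw [hsqrtq, hpdef, hsinβ]
  ring
end
end
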